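/- Let G be a finite group with a normal Sylow p-subgroup P such that C_G(P) ≤ P (i.e. C_G(P) = Z(P)). Then the group algebra kG over an algebraically closed field k of characteristic p has only one block. -/

import Mathlib

open MonoidAlgebra Finset

namespace OneBlockAux

set_option linter.unusedSectionVars false

open scoped Classical Pointwise

open scoped Classical

variable {k : Type*} [Field k] {p : ℕ} [Fact p.Prime] [CharP k p]

lemma charP_MA (G : Type*) [Group G] : CharP (MonoidAlgebra k G) p := by
  have h1 : ∀ a : k, (algebraMap k (MonoidAlgebra k G) a).coeff 1 = a := by
    intro a
    rw [Algebra.algebraMap_eq_smul_one]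
    simp [MonoidAlgebra.one_def]
  exact charP_of_injective_algebraMap
    (fun a b h => by rw [← h1 a, ← h1 b, h]) p

noncomputable def trunc {G : Type*} (C : Set G) (e : MonoidAlgebra k G) : MonoidAlgebra k G :=
  MonoidAlgebra.ofCoeff (Finsupp.filter (fun g => g ∈ C) e.coeff)

lemma trunc_apply {G : Type*} (C : Set G) (e : MonoidAlgebra k G) (g : G) :
    (trunc C e).coeff g = if g ∈ C then e.coeff g else 0 := Finsupp.filter_apply _ e.coeff g

lemma mul_apply_univ {G : Type*} [Group G] [Fintype G] (f g : MonoidAlgebra k G) (x : G) :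
    (f * g).coeff x = ∑ a : G, f.coeff a * g.coeff (a⁻¹ * x) := by
  rw [MonoidAlgebra.mul_apply_antidiagonal f g x
    (univ.map ⟨fun a => (a, a⁻¹ * x), (show Function.Injective (fun a : G => (a, a⁻¹ * x)) from
      fun a b h => by simpa using (congrArg Prod.fst h))⟩)
    (fun {q} => by
      simp only [Finset.mem_map, Finset.mem_univ, true_and, Function.Embedding.coeFn_mk]
      constructor
      · rintro ⟨a, rfl⟩; simp
      · rintro h
        exact ⟨q.1, by rw [Prod.ext_iff]; exact ⟨rfl, by rw [← h]; simp⟩⟩),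
    Finset.sum_map]
  rfl

lemma conj_coeff {G : Type*} [Group G] (e : MonoidAlgebra k G)
    (hce : ∀ x, e * x = x * e) (u g : G) :
    e.coeff (u * g * u⁻¹) = e.coeff g := by
  have h2 : (e * MonoidAlgebra.single u (1:k)).coeff (u*g) = (MonoidAlgebra.single u (1:k) * e).coeff (u*g) :=
    by rw [hce]
  rw [MonoidAlgebra.mul_single_apply, MonoidAlgebra.single_mul_apply] at h2
  simpa [mul_assoc] using h2

lemma isNilpotent_sum' {R : Type*} [Ring R] {ι : Type*} (s : Finset ι) (f : ι → R)
    (hnil : ∀ i ∈ s, IsNilpotent (f i))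
    (hcomm : ∀ i ∈ s, ∀ j ∈ s, Commute (f i) (f j)) :
    IsNilpotent (∑ i ∈ s, f i) := by
  induction s using Finset.induction with
  | empty => simpa using IsNilpotent.zero
  | @insert a s ha ih =>
    rw [Finset.sum_insert ha]
    refine Commute.isNilpotent_add
      (Commute.sum_right _ _ _ (fun j hj =>
        hcomm a (mem_insert_self a s) j (mem_insert_of_mem hj)))
      (hnil a (mem_insert_self a s)) (ih (fun i hi => hnil i (mem_insert_of_mem hi))
        (fun i hi j hj => hcomm i (mem_insert_of_mem hi) j (mem_insert_of_mem hj)))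

/-- Weighted fixed point congruence for p-group actions in char p. -/
lemma sum_eq_sum_fixed {H α : Type*} [Group H] [Finite H] [Fintype α] [MulAction H α]
    (hH : IsPGroup p H) (φ : α → k) (hφ : ∀ (h : H) a, φ (h • a) = φ a) :
    ∑ a, φ a = ∑ a ∈ univ.filter (fun a => ∀ h : H, h • a = a), φ a := by
  obtain ⟨n, hn⟩ := IsPGroup.iff_card.mp hH
  haveI : Finite (Quotient (MulAction.orbitRel H α)) := Quotient.finite _
  haveI : Fintype (Quotient (MulAction.orbitRel H α)) := Fintype.ofFinite _
  have hconst : ∀ {a b : α}, (⟦a⟧ : Quotient (MulAction.orbitRel H α)) = ⟦b⟧ → φ a = φ b := by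
    intro a b hab
    have h1 : a ∈ MulAction.orbit H b := MulAction.orbitRel_apply.mp (Quotient.exact hab)
    obtain ⟨h, rfl⟩ := h1
    exact hφ h b
  have key : ∀ ω : Quotient (MulAction.orbitRel H α),
      ∑ a ∈ univ.filter (fun a => (⟦a⟧ : Quotient (MulAction.orbitRel H α)) = ω), φ a
        = ∑ a ∈ (univ.filter (fun a => ∀ h : H, h • a = a)).filter
            (fun a => (⟦a⟧ : Quotient (MulAction.orbitRel H α)) = ω), φ a := by
    intro ω
    set r := ω.out with hr
    have hrω : (⟦r⟧ : Quotient (MulAction.orbitRel H α)) = ω := Quotient.out_eq ω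
    have horb : ∀ a : α, ((⟦a⟧ : Quotient (MulAction.orbitRel H α)) = ω) ↔
        a ∈ MulAction.orbit H r := by
      intro a
      rw [← hrω, Quotient.eq]
      exact MulAction.orbitRel_apply
    by_cases hfix : ∀ h : H, h • r = r
    · -- orbit is the singleton {r}
      have hsing : ∀ a : α, a ∈ MulAction.orbit H r ↔ a = r := by
        intro a
        constructor
        · rintro ⟨h, rfl⟩; exact hfix h
        · rintro rfl; exact MulAction.mem_orbit_self r
      have h1 : univ.filter (fun a => (⟦a⟧ : Quotient (MulAction.orbitRel H α)) = ω) = {r} := by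
        ext a; simp [horb, hsing]
      have h2 : (univ.filter (fun a => ∀ h : H, h • a = a)).filter
          (fun a => (⟦a⟧ : Quotient (MulAction.orbitRel H α)) = ω) = {r} := by
        ext a
        simp only [Finset.mem_filter, Finset.mem_univ, true_and, Finset.mem_singleton, horb, hsing]
        exact ⟨fun h => h.2, fun h => ⟨h ▸ hfix, h⟩⟩
      rw [h1, h2]
    · -- all elements of the orbit are non-fixed; card of orbit is divisible by p
      have hnofix : ∀ a ∈ MulAction.orbit H r, ¬ (∀ h : H, h • a = a) := by
        rintro a ⟨h0, rfl⟩ hafix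
        refine hfix (fun h => ?_)
        have h1 : ∀ h : H, h • (h0 • r) = h0 • r := hafix
        have h2 := h1 (h0 * h * h0⁻¹)
        simp only [mul_smul, inv_smul_smul] at h2
        exact smul_left_cancel h0 h2
      have h2 : (univ.filter (fun a => ∀ h : H, h • a = a)).filter
          (fun a => (⟦a⟧ : Quotient (MulAction.orbitRel H α)) = ω) = ∅ := by
        ext a
        simp only [Finset.mem_filter, Finset.mem_univ, true_and, Finset.notMem_empty,
          iff_false, not_and, horb]
        intro hafix ha
        exact hnofix a ha hafix
      rw [h2, Finset.sum_empty]
      -- the fiber sum is (card) • φ r with card = p^m, m ≥ 1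
      have hcongr : ∀ a ∈ univ.filter (fun a => (⟦a⟧ : Quotient (MulAction.orbitRel H α)) = ω),
          φ a = φ r := by
        intro a ha
        exact hconst (by rw [(Finset.mem_filter.mp ha).2, hrω])
      rw [Finset.sum_congr rfl hcongr, Finset.sum_const]
      have hcardeq : (univ.filter (fun a => (⟦a⟧ : Quotient (MulAction.orbitRel H α)) = ω)).card
          = Nat.card (MulAction.orbit H r) := by
        rw [Nat.card_eq_fintype_card, Fintype.card_subtype]
        congr 1
        exact Finset.filter_congr (fun a _ => by rw [horb])
      have hdvd : (univ.filter (fun a => (⟦a⟧ : Quotient (MulAction.orbitRel H α)) = ω)).card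
          ∣ p ^ n := by
        rw [hcardeq, ← hn, Nat.card_congr (MulAction.orbitEquivQuotientStabilizer H r)]
        exact Dvd.intro _ (Subgroup.card_eq_card_quotient_mul_card_subgroup
          (MulAction.stabilizer H r)).symm
      obtain ⟨m, hm, hcard⟩ := (Nat.dvd_prime_pow (Fact.out : p.Prime)).mp hdvd
      have hm1 : m ≠ 0 := by
        intro h0
        rw [h0, pow_zero] at hcard
        obtain ⟨a, hae⟩ := Finset.card_eq_one.mp hcard
        have hrmem : r ∈ univ.filter (fun a => (⟦a⟧ : Quotient (MulAction.orbitRel H α)) = ω) := by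
          simp [horb, MulAction.mem_orbit_self]
        rw [hae, Finset.mem_singleton] at hrmem
        refine hfix (fun h => ?_)
        have hmem : h • r ∈ univ.filter
            (fun a => (⟦a⟧ : Quotient (MulAction.orbitRel H α)) = ω) := by
          simp only [Finset.mem_filter, Finset.mem_univ, true_and, horb]
          exact ⟨h, rfl⟩
        rw [hae, Finset.mem_singleton] at hmem
        rw [hmem, ← hrmem]
      rw [hcard, nsmul_eq_mul, Nat.cast_pow, CharP.cast_eq_zero k p,
        zero_pow hm1, zero_mul]
  calc ∑ a, φ a
      = ∑ ω : Quotient (MulAction.orbitRel H α),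
          ∑ a ∈ univ.filter (fun a => (⟦a⟧ : Quotient (MulAction.orbitRel H α)) = ω), φ a := by
        rw [Finset.sum_fiberwise]
    _ = ∑ ω : Quotient (MulAction.orbitRel H α),
          ∑ a ∈ (univ.filter (fun a => ∀ h : H, h • a = a)).filter
            (fun a => (⟦a⟧ : Quotient (MulAction.orbitRel H α)) = ω), φ a :=
        Finset.sum_congr rfl (fun ω _ => key ω)
    _ = ∑ a ∈ univ.filter (fun a => ∀ h : H, h • a = a), φ a := by
        rw [Finset.sum_fiberwise]


/-- If all left `K`-coset sums of coefficients of `f` vanish, `f` is in the span of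
the elements `γ(u-1)`, `u ∈ K`. -/
lemma mem_span_coset {Γ : Type*} [Group Γ] [Fintype Γ] (K : Subgroup Γ) (f : MonoidAlgebra k Γ)
    (hf : ∀ γ : Γ, ∑ x ∈ univ.filter (fun x => γ⁻¹ * x ∈ K), f.coeff x = 0) :
    f ∈ Submodule.span k
      {x : MonoidAlgebra k Γ | ∃ γ u, u ∈ K ∧ x = of k Γ γ * (of k Γ u - 1)} := by
  set σ : Γ ⧸ K → Γ := Quotient.out with hσ
  have hself : ∀ x : Γ, (σ (QuotientGroup.mk x))⁻¹ * x ∈ K := by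
    intro x
    rw [← QuotientGroup.eq]
    exact QuotientGroup.out_eq' _
  have hrepr : f = ∑ x : Γ, MonoidAlgebra.single x (f.coeff x) := by
    ext y
    rw [MonoidAlgebra.coeff_sum, Finset.sum_apply']
    simp [Finsupp.single_apply]
  have hterm : ∀ x : Γ, (MonoidAlgebra.single x (f.coeff x) : MonoidAlgebra k Γ)
      = f.coeff x • (of k Γ (σ (QuotientGroup.mk x)) * (of k Γ ((σ (QuotientGroup.mk x))⁻¹ * x) - 1))
        + f.coeff x • of k Γ (σ (QuotientGroup.mk x)) := by
    intro x
    rw [mul_sub, mul_one, ← map_mul, mul_inv_cancel_left, ← smul_add, sub_add_cancel]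
    rw [MonoidAlgebra.of_apply, MonoidAlgebra.smul_single', mul_one]
  rw [hrepr, Finset.sum_congr rfl (fun x _ => hterm x), Finset.sum_add_distrib]
  have h2 : ∑ x : Γ, f.coeff x • of k Γ (σ (QuotientGroup.mk x)) = 0 := by
    rw [← Finset.sum_fiberwise univ (fun x : Γ => (QuotientGroup.mk x : Γ ⧸ K))
      (fun x => f.coeff x • of k Γ (σ (QuotientGroup.mk x)))]
    refine Finset.sum_eq_zero fun j _ => ?_
    have hc : ∀ x ∈ univ.filter (fun x : Γ => (QuotientGroup.mk x : Γ ⧸ K) = j),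
        f.coeff x • of k Γ (σ (QuotientGroup.mk x)) = f.coeff x • of k Γ (σ j) := by
      intro x hx
      rw [(Finset.mem_filter.mp hx).2]
    rw [Finset.sum_congr rfl hc, ← Finset.sum_smul]
    have hfilt : (univ.filter (fun x : Γ => (QuotientGroup.mk x : Γ ⧸ K) = j))
        = univ.filter (fun x => (σ j)⁻¹ * x ∈ K) := by
      refine Finset.filter_congr (fun x _ => ?_)
      rw [← QuotientGroup.eq]
      constructor
      · intro h; rw [QuotientGroup.out_eq', h]
      · intro h; rw [← h, QuotientGroup.out_eq']
    rw [hfilt, hf (σ j), zero_smul]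
  rw [h2, add_zero]
  refine Submodule.sum_mem _ (fun x _ => Submodule.smul_mem _ _ (Submodule.subset_span ?_))
  exact ⟨σ (QuotientGroup.mk x), (σ (QuotientGroup.mk x))⁻¹ * x, hself x, rfl⟩

lemma mapDomain_apply_sum {α β : Type*} [Fintype α] [DecidableEq β] (h : α → β) (f : α →₀ k) (b : β) :
    Finsupp.mapDomain h f b = ∑ x ∈ univ.filter (fun x => h x = b), f x := by
  rw [Finsupp.mapDomain, Finsupp.sum_apply, Finsupp.sum, Finset.sum_filter]
  rw [← Finset.sum_subset (Finset.subset_univ f.support)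
    (fun x _ hx => by simp [Finsupp.notMem_support_iff.mp hx])]
  refine Finset.sum_congr rfl fun x _ => ?_
  rw [Finsupp.single_apply]

universe u

/-- products of `p ^ m` many elements of the form `q - 1` in the group algebra of a
finite `p`-group vanish. -/
lemma pgroup_prod_eq_zero : ∀ (n : ℕ) (Q : Type u) (_ : Group Q) (_ : Fintype Q),
    Fintype.card Q ≤ n → IsPGroup p Q →
    ∃ N : ℕ, 0 < N ∧ ∀ l : List Q, l.length = N →
      (l.map (fun q => of k Q q - 1)).prod = 0 := by
  intro n
  induction n with
  | zero =>
    intro Q _ _ hcard _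
    exact absurd (lt_of_lt_of_le Fintype.card_pos hcard) (lt_irrefl 0)
  | succ n ih =>
    intro Q _ _ hcard hQ
    rcases subsingleton_or_nontrivial Q with hsub | hnt
    · refine ⟨1, one_pos, fun l hl => ?_⟩
      obtain ⟨q, rfl⟩ := List.length_eq_one_iff.mp hl
      have : q = 1 := Subsingleton.elim q 1
      simp [this, MonoidAlgebra.one_def]
    · haveI : CharP (MonoidAlgebra k Q) p := charP_MA Q
      haveI := hQ.center_nontrivial
      obtain ⟨⟨z, hz⟩, hz1⟩ := exists_ne (1 : Subgroup.center Q)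
      have hzne : z ≠ 1 := by
        intro h
        exact hz1 (Subtype.ext h)
      have hzcomm : ∀ w : Q, z * w = w * z := fun w =>
        ((Subgroup.mem_center_iff.mp hz) w).symm
      set K := Subgroup.zpowers z with hK
      haveI hKn : K.Normal := by
        constructor
        intro x hx g
        obtain ⟨i, rfl⟩ := Subgroup.mem_zpowers_iff.mp hx
        have hc : Commute z g := hzcomm g
        have heq : g * z ^ i * g⁻¹ = z ^ i := by
          rw [← (hc.zpow_left i).eq, mul_assoc, mul_inv_cancel, mul_one]
        rw [heq]; exact hx
      haveI : Fintype (Q ⧸ K) := Fintype.ofFinite _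
      have hKnt : Nontrivial K :=
        ⟨⟨⟨z, Subgroup.mem_zpowers z⟩, 1, fun h => hzne (by simpa using Subtype.ext_iff.mp h)⟩⟩
      have hmul : Nat.card Q = Nat.card (Q ⧸ K) * Nat.card K :=
        Subgroup.card_eq_card_quotient_mul_card_subgroup K
      have hK2 : 2 ≤ Nat.card K := Finite.one_lt_card_iff_nontrivial.mpr hKnt
      have hQpos : 1 ≤ Nat.card (Q ⧸ K) := Nat.card_pos
      have hcard' : Fintype.card (Q ⧸ K) ≤ n := by
        have h1 : Nat.card (Q ⧸ K) * 2 ≤ Nat.card Q := by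
          calc Nat.card (Q ⧸ K) * 2 ≤ Nat.card (Q ⧸ K) * Nat.card K :=
                Nat.mul_le_mul_left _ hK2
            _ = Nat.card Q := hmul.symm
        have h2 : Nat.card Q ≤ n + 1 := by rwa [Nat.card_eq_fintype_card]
        rw [← Nat.card_eq_fintype_card]
        omega
      obtain ⟨N', hN'pos, hN'⟩ := ih (Q ⧸ K) _ _ hcard' (hQ.to_quotient K)
      obtain ⟨m, hzq⟩ := hQ z
      set ζ := of k Q z with hζ
      have hζcomm : ∀ y : MonoidAlgebra k Q, Commute ζ y := by
        intro y
        show ζ * y = y * ζ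
        ext w
        rw [hζ, MonoidAlgebra.of_apply, MonoidAlgebra.single_mul_apply,
          MonoidAlgebra.mul_single_apply, one_mul, mul_one]
        congr 1
        exact ((show Commute z w from hzcomm w).inv_left).eq
      have hc : ∀ y : MonoidAlgebra k Q, Commute (ζ - 1) y := fun y =>
        (hζcomm y).sub_left (Commute.one_left y)
      have hζnil : (ζ - 1) ^ (p ^ m) = 0 := by
        rw [sub_pow_char_pow_of_commute _ _ (Commute.one_right ζ), one_pow,
          ← map_pow, hzq, map_one, sub_self]
      set π := MonoidAlgebra.mapDomainRingHom k (QuotientGroup.mk' K) with hπ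
      have hπof : ∀ q : Q, π (of k Q q - 1) = of k (Q ⧸ K) (QuotientGroup.mk q) - 1 := by
        intro q
        rw [map_sub, map_one]
        congr 1
        simp [hπ, MonoidAlgebra.mapDomainRingHom, MonoidAlgebra.of_apply]
      have hker : ∀ x : MonoidAlgebra k Q, π x = 0 → ∃ y, x = (ζ - 1) * y := by
        intro x hx
        have hcos : ∀ γ : Q, ∑ w ∈ univ.filter (fun w => γ⁻¹ * w ∈ K), x.coeff w = 0 := by
          intro γ
          have h0 : (π x).coeff (QuotientGroup.mk γ) = 0 := by rw [hx]; rfl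
          have hπx : (π x : MonoidAlgebra k (Q ⧸ K)).coeff
              = Finsupp.mapDomain (fun q : Q => (QuotientGroup.mk q : Q ⧸ K)) x.coeff := rfl
          have h1 : (π x).coeff (QuotientGroup.mk γ)
              = ∑ w ∈ univ.filter (fun w => (QuotientGroup.mk w : Q ⧸ K) = QuotientGroup.mk γ),
                  x.coeff w := by
            rw [hπx]; exact mapDomain_apply_sum _ x.coeff _
          rw [h1] at h0
          rw [← h0]
          refine Finset.sum_congr (Finset.filter_congr (fun w _ => ?_)) (fun _ _ => rfl)
          rw [← QuotientGroup.eq]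
          exact ⟨fun h => h.symm, fun h => h.symm⟩
        have hspan := mem_span_coset K x hcos
        have hle : Submodule.span k
            {y : MonoidAlgebra k Q | ∃ γ u, u ∈ K ∧ y = of k Q γ * (of k Q u - 1)}
            ≤ LinearMap.range (LinearMap.mulLeft k (ζ - 1)) := by
          rw [Submodule.span_le]
          rintro y ⟨γ, u, hu, rfl⟩
          have hu' := mem_powers_iff_mem_zpowers.mpr hu
          rw [Submonoid.mem_powers_iff] at hu'
          obtain ⟨j, hj⟩ := hu'
          have : of k Q u - 1 = (∑ i ∈ range j, ζ ^ i) * (ζ - 1) := by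
            rw [geom_sum_mul, hζ, ← map_pow, hj]
          refine ⟨of k Q γ * (∑ i ∈ range j, ζ ^ i), ?_⟩
          rw [LinearMap.mulLeft_apply, this,
            (hc (of k Q γ * (∑ i ∈ range j, ζ ^ i))).eq, mul_assoc]
        obtain ⟨y, hy⟩ := hle hspan
        exact ⟨y, by rw [← hy, LinearMap.mulLeft_apply]⟩
      have hchunk : ∀ (j : ℕ) (l : List Q), l.length = j * N' →
          ∃ y, (l.map (fun q => of k Q q - 1)).prod = (ζ - 1) ^ j * y := by
        intro j
        induction j with
        | zero => intro l _; exact ⟨(l.map (fun q => of k Q q - 1)).prod, by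
            rw [pow_zero, one_mul]⟩
        | succ j ihj =>
          intro l hl
          have hlen1 : (l.take N').length = N' := by
            rw [List.length_take, hl]
            have : N' ≤ (j+1) * N' := Nat.le_mul_of_pos_left N' (Nat.succ_pos j)
            omega
          have hlen2 : (l.drop N').length = j * N' := by
            rw [List.length_drop, hl]
            ring_nf
            omega
          obtain ⟨y₁, h₁⟩ : ∃ y, ((l.take N').map (fun q => of k Q q - 1)).prod = (ζ - 1) * y := by
            apply hker
            rw [map_list_prod, List.map_map]
            have heq : (⇑π ∘ fun q => of k Q q - 1)
                = (fun q' => of k (Q ⧸ K) q' - 1) ∘ (QuotientGroup.mk : Q → Q ⧸ K) :=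
              funext fun q => hπof q
            rw [heq, ← List.map_map]
            exact hN' _ (by rw [List.length_map, hlen1])
          obtain ⟨y₂, h₂⟩ := ihj (l.drop N') hlen2
          refine ⟨y₁ * y₂, ?_⟩
          have hcom : y₁ * (ζ - 1) ^ j = (ζ - 1) ^ j * y₁ := (((hc y₁).pow_left j).eq).symm
          conv_lhs => rw [← List.take_append_drop N' l]
          rw [List.map_append, List.prod_append, h₁, h₂, pow_succ']
          simp only [mul_assoc]
          congr 1
          rw [← mul_assoc, hcom, mul_assoc]
      refine ⟨p ^ m * N', Nat.mul_pos (pow_pos (Fact.out : p.Prime).pos m) hN'pos,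
        fun l hl => ?_⟩
      obtain ⟨y, hy⟩ := hchunk (p ^ m) l hl
      rw [hy, hζnil, zero_mul]


lemma mapDomainRingHom_of_sub_one {Γ Δ : Type*} [Group Γ] [Group Δ] (f : Γ →* Δ) (q : Γ) :
    MonoidAlgebra.mapDomainRingHom k f (of k Γ q - 1) = of k Δ (f q) - 1 := by
  rw [map_sub, map_one]
  congr 1
  simp [MonoidAlgebra.mapDomainRingHom, MonoidAlgebra.of_apply]

/-- Weighted orbit-counting for the conjugation action of a normal p-subgroup. -/
lemma sum_conj {G : Type*} [Group G] [Fintype G] (P : Subgroup G)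
    (hP : IsPGroup p ↥P) (φ : G → k)
    (hφ : ∀ u ∈ P, ∀ g : G, φ (u * g * u⁻¹) = φ g) :
    ∑ a, φ a = ∑ a ∈ univ.filter (fun a => a ∈ Subgroup.centralizer (P : Set G)), φ a := by
  set H : Subgroup (ConjAct G) :=
    P.comap (ConjAct.ofConjAct : ConjAct G ≃* G).toMonoidHom with hH
  have hmem : ∀ x : ConjAct G, x ∈ H ↔ ConjAct.ofConjAct x ∈ P := fun x => Iff.rfl
  have hHp : IsPGroup p ↥H := by
    intro x
    obtain ⟨m, hm⟩ := hP ⟨ConjAct.ofConjAct (x : ConjAct G), (hmem _).mp x.2⟩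
    have hm' : (ConjAct.ofConjAct (x : ConjAct G)) ^ (p ^ m) = 1 := by
      simpa using congrArg Subtype.val hm
    refine ⟨m, ?_⟩
    have h2 : ConjAct.ofConjAct ((x : ConjAct G) ^ (p ^ m)) = ConjAct.ofConjAct 1 := by
      rw [map_pow, map_one, hm']
    exact Subtype.ext (by
      rw [SubmonoidClass.coe_pow]
      exact ConjAct.ofConjAct.injective h2)
  have hsmul : ∀ (h : ↥H) (a : G),
      h • a = ConjAct.ofConjAct (h : ConjAct G) * a * (ConjAct.ofConjAct (h : ConjAct G))⁻¹ :=
    fun h a => ConjAct.smul_def _ _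
  have hinv : ∀ (h : ↥H) (a : G), φ (h • a) = φ a := by
    intro h a
    rw [hsmul]
    exact hφ _ ((hmem _).mp h.2) a
  rw [sum_eq_sum_fixed hHp φ hinv]
  refine Finset.sum_congr (Finset.ext fun a => ?_) (fun _ _ => rfl)
  simp only [Finset.mem_filter, Finset.mem_univ, true_and]
  constructor
  · intro hfa
    rw [Subgroup.mem_centralizer_iff]
    intro u hu
    have h1 := hfa ⟨ConjAct.toConjAct u, (hmem _).mpr (by simpa using hu)⟩
    rw [hsmul] at h1
    simp only [ConjAct.ofConjAct_toConjAct] at h1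
    exact mul_inv_eq_iff_eq_mul.mp h1
  · intro ha h
    rw [hsmul]
    have hu := (hmem _).mp h.2
    have h1 := Subgroup.mem_centralizer_iff.mp ha _ hu
    rw [h1, mul_assoc, mul_inv_cancel, mul_one]

/-- The truncation of a central idempotent to the centralizer of `P` is idempotent. -/
lemma filter_idem {G : Type*} [Group G] [Fintype G] (P : Subgroup G) [P.Normal]
    (hP : IsPGroup p ↥P)
    (e : MonoidAlgebra k G) (he : e * e = e)
    (hce : ∀ x : MonoidAlgebra k G, e * x = x * e) :
    trunc (Subgroup.centralizer (P : Set G) : Set G) e *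
      trunc (Subgroup.centralizer (P : Set G) : Set G) e
    = trunc (Subgroup.centralizer (P : Set G) : Set G) e := by
  set C := Subgroup.centralizer (P : Set G) with hC
  set b : MonoidAlgebra k G := trunc (C : Set G) e with hb
  have hbv : ∀ y : G, b.coeff y = if y ∈ C then e.coeff y else 0 := fun y => trunc_apply _ e y
  ext x
  by_cases hx : x ∈ C
  · have hstep : ∀ a : G, b.coeff a * b.coeff (a⁻¹ * x) = if a ∈ C then e.coeff a * e.coeff (a⁻¹ * x) else 0 := by
      intro a
      by_cases ha : a ∈ C
      · rw [if_pos ha, hbv, hbv, if_pos ha, if_pos (mul_mem (inv_mem ha) hx)]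
      · rw [if_neg ha, hbv, if_neg ha, zero_mul]
    have hφinv : ∀ u ∈ P, ∀ a : G, e.coeff (u * a * u⁻¹) * e.coeff ((u * a * u⁻¹)⁻¹ * x)
        = e.coeff a * e.coeff (a⁻¹ * x) := by
      intro u hu a
      have h1 : e.coeff (u * a * u⁻¹) = e.coeff a := conj_coeff e hce u a
      have h2 : (u * a * u⁻¹)⁻¹ * x = u * (a⁻¹ * x) * u⁻¹ := by
        have hux : u⁻¹ * x = x * u⁻¹ := by
          have := Subgroup.mem_centralizer_iff.mp hx _ (inv_mem hu)
          rw [this]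
        rw [show (u * a * u⁻¹)⁻¹ = u * a⁻¹ * u⁻¹ from by group]
        rw [mul_assoc (u * a⁻¹) u⁻¹ x, hux, ← mul_assoc (u * a⁻¹) x u⁻¹, mul_assoc u a⁻¹ x]
      rw [h1, h2, conj_coeff e hce u (a⁻¹ * x)]
    calc (b * b).coeff x = ∑ a : G, b.coeff a * b.coeff (a⁻¹ * x) := mul_apply_univ b b x
      _ = ∑ a : G, (if a ∈ C then e.coeff a * e.coeff (a⁻¹ * x) else 0) :=
          Finset.sum_congr rfl (fun a _ => hstep a)
      _ = ∑ a ∈ univ.filter (fun a => a ∈ C), e.coeff a * e.coeff (a⁻¹ * x) :=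
          (Finset.sum_filter _ _).symm
      _ = ∑ a : G, e.coeff a * e.coeff (a⁻¹ * x) :=
          (sum_conj P hP (fun a => e.coeff a * e.coeff (a⁻¹ * x)) hφinv).symm
      _ = (e * e).coeff x := (mul_apply_univ e e x).symm
      _ = e.coeff x := by rw [he]
      _ = b.coeff x := by rw [hbv, if_pos hx]
  · rw [mul_apply_univ, hbv, if_neg hx]
    refine Finset.sum_eq_zero (fun a _ => ?_)
    by_cases ha : a ∈ C
    · have hax : a⁻¹ * x ∉ C := by
        intro hmem
        exact hx (by simpa using mul_mem ha hmem)
      rw [hbv (a⁻¹ * x), if_neg hax, mul_zero]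
    · rw [hbv a, if_neg ha, zero_mul]

/-- Central idempotent whose coefficients sum to `0` over the centralizer is zero. -/
lemma main0 {G : Type*} [Group G] [Fintype G] (P : Subgroup G) [P.Normal]
    (hP : IsPGroup p ↥P)
    (hcent : Subgroup.centralizer (P : Set G) ≤ P)
    (e : MonoidAlgebra k G) (he : e * e = e)
    (hce : ∀ x : MonoidAlgebra k G, e * x = x * e)
    (hs : ∑ g ∈ univ.filter (fun g => g ∈ Subgroup.centralizer (P : Set G)), e.coeff g = 0) :
    e = 0 := by
  haveI : CharP (MonoidAlgebra k G) p := charP_MA G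
  set C := Subgroup.centralizer (P : Set G) with hC
  set b : MonoidAlgebra k G := trunc (C : Set G) e with hb
  have hbv : ∀ y : G, b.coeff y = if y ∈ C then e.coeff y else 0 := fun y => trunc_apply _ e y
  have hbb : b * b = b := filter_idem P hP e he hce
  have hsuppC : ∀ g ∈ b.coeff.support, g ∈ C := by
    intro g hg
    by_contra h
    exact (Finsupp.mem_support_iff.mp hg) (by rw [hbv, if_neg h])
  have hsum : ∑ g ∈ b.coeff.support, b.coeff g = 0 := by
    have hsub : b.coeff.support ⊆ univ.filter (fun g => g ∈ C) := by
      intro g hg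
      simp only [Finset.mem_filter, Finset.mem_univ, true_and]
      exact hsuppC g hg
    rw [Finset.sum_subset hsub (fun g _ hg => Finsupp.notMem_support_iff.mp hg)]
    rw [← hs]
    refine Finset.sum_congr rfl (fun g hg => ?_)
    rw [hbv, if_pos (Finset.mem_filter.mp hg).2]
  -- b is nilpotent
  have hnil : IsNilpotent b := by
    have hb_eq : b = ∑ g ∈ b.coeff.support, b.coeff g • (of k G g - 1) := by
      have h1 : ∑ g ∈ b.coeff.support, b.coeff g • (of k G g - 1)
          = (∑ g ∈ b.coeff.support, b.coeff g • of k G g) - (∑ g ∈ b.coeff.support, b.coeff g • (1 : MonoidAlgebra k G)) := by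
        rw [← Finset.sum_sub_distrib]
        exact Finset.sum_congr rfl (fun g _ => smul_sub _ _ _)
      rw [h1, ← Finset.sum_smul, hsum, zero_smul, sub_zero]
      conv_lhs => rw [← MonoidAlgebra.sum_coeff_single b]
      rw [Finsupp.sum]
      refine Finset.sum_congr rfl (fun g _ => ?_)
      rw [MonoidAlgebra.of_apply, MonoidAlgebra.smul_single', mul_one]
    rw [hb_eq]
    refine isNilpotent_sum' _ _ (fun g hg => ?_) (fun i hi j hj => ?_)
    · have hgP : g ∈ P := hcent (hsuppC g hg)
      obtain ⟨m, hm⟩ := hP ⟨g, hgP⟩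
      have hm' : g ^ (p ^ m) = 1 := by simpa using congrArg Subtype.val hm
      refine IsNilpotent.smul ⟨p ^ m, ?_⟩ _
      rw [sub_pow_char_pow_of_commute _ _ (Commute.one_right _), one_pow, ← map_pow, hm',
        map_one, sub_self]
    · have hiC := hsuppC i hi
      have hjC := hsuppC j hj
      have hij : j * i = i * j := Subgroup.mem_centralizer_iff.mp hiC j (hcent hjC)
      have hcom : Commute (of k G i) (of k G j) := by
        show of k G i * of k G j = of k G j * of k G i
        rw [← map_mul, ← map_mul, hij]
      exact (((hcom.sub_right (Commute.one_right _)).sub_left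
        ((Commute.one_left _).sub_right (Commute.one_right _))).smul_left _).smul_right _
  -- an idempotent nilpotent element is zero
  have hb0 : b = 0 := by
    obtain ⟨n, hbn⟩ := hnil
    have hpow : ∀ m : ℕ, b ^ (m + 1) = b := by
      intro m
      induction m with
      | zero => rw [pow_one]
      | succ m ihm => rw [pow_succ, ihm, hbb]
    cases n with
    | zero =>
      rw [pow_zero] at hbn
      calc b = b * 1 := (mul_one b).symm
        _ = b * 0 := by rw [hbn]
        _ = 0 := mul_zero b
    | succ n => exact (hpow n).symm.trans hbn
  have heC : ∀ g ∈ C, e.coeff g = 0 := by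
    intro g hg
    have h1 : b.coeff g = 0 := by rw [hb0]; rfl
    rw [hbv, if_pos hg] at h1
    exact h1
  -- all coset sums of e vanish
  have hcoset : ∀ γ : G, ∑ x ∈ univ.filter (fun x => γ⁻¹ * x ∈ P), e.coeff x = 0 := by
    intro γ
    have hiff : ∀ u ∈ P, ∀ g : G, (γ⁻¹ * (u * g * u⁻¹) ∈ P ↔ γ⁻¹ * g ∈ P) := by
      intro u hu g
      constructor
      · intro h
        have heq : γ⁻¹ * g = (γ⁻¹ * u⁻¹ * γ) * (γ⁻¹ * (u * g * u⁻¹)) * u := by group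
        rw [heq]
        refine mul_mem (mul_mem ?_ h) hu
        have := Subgroup.Normal.conj_mem ‹P.Normal› u⁻¹ (inv_mem hu) γ⁻¹
        simpa [mul_assoc] using this
      · intro h
        have heq : γ⁻¹ * (u * g * u⁻¹) = (γ⁻¹ * u * γ) * (γ⁻¹ * g) * u⁻¹ := by group
        rw [heq]
        refine mul_mem (mul_mem ?_ h) (inv_mem hu)
        have := Subgroup.Normal.conj_mem ‹P.Normal› u hu γ⁻¹
        simpa [mul_assoc] using this
    have hφinv : ∀ u ∈ P, ∀ g : G,
        (if γ⁻¹ * (u * g * u⁻¹) ∈ P then e.coeff (u * g * u⁻¹) else 0)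
          = (if γ⁻¹ * g ∈ P then e.coeff g else 0) := by
      intro u hu g
      by_cases h : γ⁻¹ * g ∈ P
      · rw [if_pos h, if_pos ((hiff u hu g).mpr h), conj_coeff e hce]
      · rw [if_neg h, if_neg (fun hmem => h ((hiff u hu g).mp hmem))]
    calc ∑ x ∈ univ.filter (fun x => γ⁻¹ * x ∈ P), e.coeff x
        = ∑ x : G, (if γ⁻¹ * x ∈ P then e.coeff x else 0) := Finset.sum_filter _ _
      _ = ∑ x ∈ univ.filter (fun x => x ∈ C), (if γ⁻¹ * x ∈ P then e.coeff x else 0) :=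
          sum_conj P hP _ hφinv
      _ = 0 := Finset.sum_eq_zero (fun x hxm => by
          simp [heC x (Finset.mem_filter.mp hxm).2])
  -- e lies in the span of the elements g(u-1)
  have hspan := mem_span_coset P e hcoset
  obtain ⟨N, hNpos, hN⟩ :=
    pgroup_prod_eq_zero (k := k) (Fintype.card ↥P) ↥P inferInstance inferInstance le_rfl hP
  set T : Set (MonoidAlgebra k G) :=
    {x : MonoidAlgebra k G | ∃ γ u, u ∈ P ∧ x = of k G γ * (of k G u - 1)} with hT
  set U : ℕ → Set (MonoidAlgebra k G) := fun j =>
    {x : MonoidAlgebra k G | ∃ (w : List G) (γ : G), (∀ v ∈ w, v ∈ P) ∧ w.length = j ∧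
      x = (w.map (fun v => of k G v - 1)).prod * of k G γ} with hU
  have hswap : ∀ c u : G,
      of k G c * (of k G u - 1) = (of k G (c * u * c⁻¹) - 1) * of k G c := by
    intro c u
    rw [mul_sub, mul_one, sub_mul, one_mul, ← map_mul, ← map_mul]
    congr 2
    group
  have hTU : T ⊆ U 1 := by
    rintro x ⟨γ, u, hu, rfl⟩
    refine ⟨[γ * u * γ⁻¹], γ, ?_, rfl, ?_⟩
    · intro v hv
      rw [List.mem_singleton.mp hv]
      exact Subgroup.Normal.conj_mem ‹P.Normal› u hu γ
    · rw [List.map_singleton, List.prod_singleton]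
      exact hswap γ u
  have hprodstep : ∀ (W : MonoidAlgebra k G) (γ δ u : G),
      (W * of k G γ) * (of k G δ * (of k G u - 1))
        = (W * (of k G ((γ * δ) * u * (γ * δ)⁻¹) - 1)) * of k G (γ * δ) := by
    intro W γ δ u
    calc (W * of k G γ) * (of k G δ * (of k G u - 1))
        = W * (of k G γ * (of k G δ * (of k G u - 1))) := by rw [mul_assoc]
      _ = W * ((of k G γ * of k G δ) * (of k G u - 1)) := by rw [← mul_assoc (of k G γ)]
      _ = W * (of k G (γ * δ) * (of k G u - 1)) := by rw [← map_mul]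
      _ = W * ((of k G ((γ * δ) * u * (γ * δ)⁻¹) - 1) * of k G (γ * δ)) := by
          rw [hswap (γ * δ) u]
      _ = (W * (of k G ((γ * δ) * u * (γ * δ)⁻¹) - 1)) * of k G (γ * δ) := by
          rw [← mul_assoc]
  have hUT : ∀ (j : ℕ) (x : MonoidAlgebra k G), x ∈ U j → ∀ t ∈ T, x * t ∈ U (j + 1) := by
    rintro j x ⟨w, γ, hw, hlen, rfl⟩ t ⟨δ, u, hu, rfl⟩
    refine ⟨w ++ [(γ * δ) * u * (γ * δ)⁻¹], γ * δ, ?_,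
      by rw [List.length_append, hlen]; rfl, ?_⟩
    · intro v hv
      rcases List.mem_append.mp hv with h | h
      · exact hw v h
      · rw [List.mem_singleton.mp h]
        exact Subgroup.Normal.conj_mem ‹P.Normal› u hu (γ * δ)
    · rw [List.map_append, List.prod_append, List.map_singleton, List.prod_singleton]
      exact hprodstep _ γ δ u
  have hpowU : ∀ j : ℕ, (Submodule.span k T) ^ (j + 1) ≤ Submodule.span k (U (j + 1)) := by
    intro j
    induction j with
    | zero => rw [pow_one]; exact Submodule.span_mono hTU
    | succ j ihj =>
      rw [pow_succ]
      calc Submodule.span k T ^ (j + 1) * Submodule.span k T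
          ≤ Submodule.span k (U (j + 1)) * Submodule.span k T :=
            mul_le_mul' ihj le_rfl
        _ = Submodule.span k (U (j + 1) * T) := Submodule.span_mul_span k _ _
        _ ≤ Submodule.span k (U (j + 2)) := Submodule.span_mono (by
            rintro y hy
            rw [Set.mem_mul] at hy
            obtain ⟨a, ha, t, ht, rfl⟩ := hy
            exact hUT (j + 1) a ha t ht)
  have hepow : ∀ j : ℕ, e ^ (j + 1) ∈ (Submodule.span k T) ^ (j + 1) := by
    intro j
    induction j with
    | zero => rw [pow_one, pow_one]; exact hspan
    | succ j ihj =>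
      rw [pow_succ, pow_succ]
      exact Submodule.mul_mem_mul ihj hspan
  have hUzero : ∀ x ∈ U N, x = 0 := by
    rintro x ⟨w, γ, hw, hlen, rfl⟩
    have hgen : ∀ (w : List G) (hw : ∀ v ∈ w, v ∈ P),
        (w.map (fun v => of k G v - 1)).prod
          = (MonoidAlgebra.mapDomainRingHom k P.subtype)
              (((w.pmap (fun v hv => (⟨v, hv⟩ : ↥P)) hw).map
                (fun q => of k ↥P q - 1)).prod) := by
      intro w
      induction w with
      | nil => intro hw; simp only [List.pmap, List.map_nil, List.prod_nil, map_one]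
      | cons a w ih =>
        intro hw
        rw [List.pmap, List.map_cons, List.map_cons, List.prod_cons, List.prod_cons, map_mul,
          mapDomainRingHom_of_sub_one, ← ih (fun v hv => hw v (List.mem_cons_of_mem a hv))]
        rfl
    have hprod : (w.map (fun v => of k G v - 1)).prod = 0 := by
      rw [hgen w hw, hN _ (by rw [List.length_pmap, hlen]), map_zero]
    rw [hprod, zero_mul]
  obtain ⟨N0, rfl⟩ : ∃ N0, N = N0 + 1 := ⟨N - 1, by omega⟩
  have hepen : e ^ (N0 + 1) = 0 := by
    have h1 : e ^ (N0 + 1) ∈ Submodule.span k (U (N0 + 1)) := hpowU N0 (hepow N0)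
    have h2 : Submodule.span k (U (N0 + 1)) ≤ ⊥ :=
      Submodule.span_le.mpr (fun x hx => (Submodule.mem_bot k).mpr (hUzero x hx))
    exact (Submodule.mem_bot k).mp (h2 h1)
  have hid : ∀ m : ℕ, e ^ (m + 1) = e := by
    intro m
    induction m with
    | zero => rw [pow_one]
    | succ m ihm => rw [pow_succ, ihm, he]
  rw [← hid N0, hepen]

end OneBlockAux

/-- Let `G` be a finite group with a normal Sylow `p`-subgroup `P` such that
`C_G(P) ≤ P`. Then the group algebra `kG`, over an algebraically closed field `k`
of characteristic `p`, has only one block: its only central idempotents are `0`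
and `1`. -/
theorem one_block_of_normal_sylow_selfcentralizing {k : Type*} [Field k] [IsAlgClosed k]
    (p : ℕ) [Fact p.Prime] [CharP k p]
    {G : Type*} [Group G] [Finite G] (P : Subgroup G) [P.Normal]
    (hP : IsPGroup p P) (hsyl : ¬ p ∣ P.index)
    (hcent : Subgroup.centralizer (P : Set G) ≤ P)
    (e : MonoidAlgebra k G) (he : e * e = e)
    (hce : ∀ x : MonoidAlgebra k G, e * x = x * e) :
    e = 0 ∨ e = 1 := by
  classical
  cases nonempty_fintype G
  set C := Subgroup.centralizer (P : Set G) with hC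
  set b : MonoidAlgebra k G := OneBlockAux.trunc (C : Set G) e with hb
  have hbv : ∀ y : G, b.coeff y = if y ∈ C then e.coeff y else 0 := fun y => OneBlockAux.trunc_apply _ e y
  have hbb : b * b = b := OneBlockAux.filter_idem P hP e he hce
  set ε : MonoidAlgebra k G →ₐ[k] k := MonoidAlgebra.lift k k G 1 with hε
  have hεapp : ∀ f : MonoidAlgebra k G, ε f = ∑ g ∈ f.coeff.support, f.coeff g := by
    intro f
    rw [hε, MonoidAlgebra.lift_apply, Finsupp.sum]
    refine Finset.sum_congr rfl (fun g _ => ?_)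
    rw [MonoidHom.one_apply, smul_eq_mul, mul_one]
  have hsC : ε b = ∑ g ∈ Finset.univ.filter (fun g => g ∈ C), e.coeff g := by
    rw [hεapp]
    have hsub : b.coeff.support ⊆ Finset.univ.filter (fun g => g ∈ C) := fun g hg => by
      simp only [Finset.mem_filter, Finset.mem_univ, true_and]
      by_contra h
      exact (Finsupp.mem_support_iff.mp hg) (by rw [hbv, if_neg h])
    rw [Finset.sum_subset hsub (fun g _ hg => Finsupp.notMem_support_iff.mp hg)]
    exact Finset.sum_congr rfl (fun g hg => by rw [hbv, if_pos (Finset.mem_filter.mp hg).2])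
  have hss : ε b * ε b = ε b := by rw [← map_mul, hbb]
  have hcases : ε b = 0 ∨ ε b = 1 := by
    have h0 : ε b * (ε b - 1) = 0 := by rw [mul_sub, mul_one, hss, sub_self]
    rcases mul_eq_zero.mp h0 with h | h
    · exact Or.inl h
    · exact Or.inr (sub_eq_zero.mp h)
  rcases hcases with h0 | h1
  · left
    exact OneBlockAux.main0 P hP hcent e he hce (by rw [← hsC]; exact h0)
  · right
    have he' : (1 - e) * (1 - e) = 1 - e := by
      have hx : (1 - e) * (1 - e) = 1 - e - e + e * e := by noncomm_ring
      rw [hx, he]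
      abel
    have hce' : ∀ x : MonoidAlgebra k G, (1 - e) * x = x * (1 - e) := by
      intro x
      rw [sub_mul, one_mul, mul_sub, mul_one, hce x]
    have hs' : ∑ g ∈ Finset.univ.filter (fun g => g ∈ C), (1 - e : MonoidAlgebra k G).coeff g = 0 := by
      have hsub : ∀ g : G, (1 - e : MonoidAlgebra k G).coeff g = (1 : MonoidAlgebra k G).coeff g - e.coeff g :=
        fun g => Finsupp.sub_apply _ _ _
      rw [Finset.sum_congr rfl (fun g _ => hsub g), Finset.sum_sub_distrib]
      have hone : ∑ g ∈ Finset.univ.filter (fun g => g ∈ C), (1 : MonoidAlgebra k G).coeff g = 1 := by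
        have h1 : ∀ g : G, (1 : MonoidAlgebra k G).coeff g = if (1 : G) = g then (1 : k) else 0 := by
          intro g
          rw [MonoidAlgebra.one_def]
          exact Finsupp.single_apply
        rw [Finset.sum_congr rfl (fun g _ => h1 g), Finset.sum_ite_eq]
        rw [if_pos]
        simp [Subgroup.one_mem]
      have htot : ∑ g ∈ Finset.univ.filter (fun g => g ∈ C), e.coeff g = 1 := by rw [← hsC]; exact h1
      rw [hone, htot, sub_self]
    have hz := OneBlockAux.main0 P hP hcent (1 - e) he' hce' hs'
    exact (sub_eq_zero.mp hz).symm
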